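/- Let n and α be positive integers and let p be a real number with 4/n^{α−1} ≤ p ≤ 1/2 − 1/n^{α−1}, where n^{α−1} denotes the real number n^α/n; set k₀ := (1 − p − 2/n^{α−1})/p. Then for every positive integer k: if (k : ℝ) ≤ k₀ then max{2n, 2n/k + ((k−1)/k)·(1−p)·n^α, (1−2p)·n^α} = (1−2p)·n^α, and if (k : ℝ) > k₀ then max{2n, 2n/k + ((k−1)/k)·(1−p)·n^α, (1−2p)·n^α} = 2n/k + ((k−1)/k)·(1−p)·n^α. -/

import Mathlib

/-- Arithmetic content of the upper bounds (B1) and (B2) of Lemma B.1. -/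
theorem stmt_4 (n α : ℕ) (hn : 0 < n) (hα : 0 < α) (p : ℝ)
    (hp4 : 4 / ((n : ℝ) ^ α / (n : ℝ)) ≤ p)
    (hp12 : p ≤ 1 / 2 - 1 / ((n : ℝ) ^ α / (n : ℝ))) :
    ∀ k : ℕ, 0 < k →
      ((k : ℝ) ≤ (1 - p - 2 / ((n : ℝ) ^ α / (n : ℝ))) / p →
        max (2 * (n : ℝ))
          (max (2 * (n : ℝ) / (k : ℝ) + (((k : ℝ) - 1) / (k : ℝ)) * (1 - p) * (n : ℝ) ^ α)
            ((1 - 2 * p) * (n : ℝ) ^ α))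
          = (1 - 2 * p) * (n : ℝ) ^ α) ∧
      ((k : ℝ) > (1 - p - 2 / ((n : ℝ) ^ α / (n : ℝ))) / p →
        max (2 * (n : ℝ))
          (max (2 * (n : ℝ) / (k : ℝ) + (((k : ℝ) - 1) / (k : ℝ)) * (1 - p) * (n : ℝ) ^ α)
            ((1 - 2 * p) * (n : ℝ) ^ α))
          = 2 * (n : ℝ) / (k : ℝ) + (((k : ℝ) - 1) / (k : ℝ)) * (1 - p) * (n : ℝ) ^ α) := by
  have hn' : (0:ℝ) < n := by exact_mod_cast hn
  set N : ℝ := (n:ℝ) ^ α / (n:ℝ) with hNdef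
  have hpa : (0:ℝ) < (n:ℝ) ^ α := pow_pos hn' α
  have hN : 0 < N := div_pos hpa hn'
  have hp0 : 0 < p := lt_of_lt_of_le (div_pos (by norm_num) hN) hp4
  have h2N : (2 / N) * ((n:ℝ) ^ α) = 2 * (n:ℝ) := by
    field_simp [hNdef]
    rw [hNdef, div_mul_cancel₀ _ hn'.ne']
  have h12 : 2 / N ≤ 1 - 2 * p := by
    have : 2 / N = 2 * (1 / N) := by ring
    linarith [this]
  have h2n : 2 * (n:ℝ) ≤ (1 - 2 * p) * (n:ℝ) ^ α := by
    calc 2 * (n:ℝ) = (2 / N) * ((n:ℝ) ^ α) := h2N.symm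
      _ ≤ (1 - 2 * p) * (n:ℝ) ^ α := mul_le_mul_of_nonneg_right h12 hpa.le
  intro k hk
  have hk' : (0:ℝ) < (k:ℝ) := by exact_mod_cast hk
  have hkne : (k:ℝ) ≠ 0 := ne_of_gt hk'
  have hk1 : (1:ℝ) ≤ (k:ℝ) := by exact_mod_cast hk
  have hBeq : 2 * (n:ℝ) / (k:ℝ) + (((k:ℝ) - 1) / (k:ℝ)) * (1 - p) * (n:ℝ) ^ α
      = (2 * (n:ℝ) + ((k:ℝ) - 1) * (1 - p) * (n:ℝ) ^ α) / (k:ℝ) := by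
    field_simp
  constructor
  · intro hkle
    have hkp : (k:ℝ) * p ≤ 1 - p - 2 / N := (le_div_iff₀ hp0).mp hkle
    have hkey : 2 * (n:ℝ) ≤ (1 - p - (k:ℝ) * p) * (n:ℝ) ^ α := by
      calc 2 * (n:ℝ) = (2 / N) * ((n:ℝ) ^ α) := h2N.symm
        _ ≤ (1 - p - (k:ℝ) * p) * (n:ℝ) ^ α :=
            mul_le_mul_of_nonneg_right (by linarith) hpa.le
    have hB : 2 * (n:ℝ) / (k:ℝ) + (((k:ℝ) - 1) / (k:ℝ)) * (1 - p) * (n:ℝ) ^ α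
        ≤ (1 - 2 * p) * (n:ℝ) ^ α := by
      rw [hBeq, div_le_iff₀ hk']
      nlinarith [hkey]
    rw [max_eq_right hB, max_eq_right h2n]
  · intro hkgt
    have hkp : 1 - p - 2 / N < (k:ℝ) * p := by
      have := (div_lt_iff₀ hp0).mp hkgt
      linarith
    have hCB : (1 - 2 * p) * (n:ℝ) ^ α
        ≤ 2 * (n:ℝ) / (k:ℝ) + (((k:ℝ) - 1) / (k:ℝ)) * (1 - p) * (n:ℝ) ^ α := by
      rw [hBeq, le_div_iff₀ hk']
      have hkey : (1 - p - (k:ℝ) * p) * (n:ℝ) ^ α ≤ 2 * (n:ℝ) := by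
        calc (1 - p - (k:ℝ) * p) * (n:ℝ) ^ α ≤ (2 / N) * ((n:ℝ) ^ α) :=
              mul_le_mul_of_nonneg_right (by linarith) hpa.le
          _ = 2 * (n:ℝ) := h2N
      nlinarith [hkey]
    have hAB : 2 * (n:ℝ)
        ≤ 2 * (n:ℝ) / (k:ℝ) + (((k:ℝ) - 1) / (k:ℝ)) * (1 - p) * (n:ℝ) ^ α := by
      rw [hBeq, le_div_iff₀ hk']
      have h2n' : 2 * (n:ℝ) ≤ (1 - p) * (n:ℝ) ^ α := by nlinarith
      nlinarith [mul_le_mul_of_nonneg_left h2n' (by linarith : (0:ℝ) ≤ (k:ℝ) - 1)]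
    rw [max_eq_left hCB, max_eq_right hAB]
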